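/- arXiv:1506.06286 — 5 statements merged into one kernel-verified Lean document; each statement's English description precedes it below -/
import Mathlib

section
/- Let A = F_q[θ] and let ℓ_n = ∏_{k=1}^{n}(θ − θ^{q^k}), ℓ_0 = 1. Let φ_θ = Σ_{j=0}^r α_j τ^j with α_0 = θ, α_j ∈ A, define a Drinfeld A-module, and let log_φ = Σ_{n≥0} l_n τ^n be its logarithm (determined by log_φ φ_θ = θ log_φ and l_0 = 1). Then for every n ≥ 0 there exists a_n ∈ A with l_n = a_n/ℓ_n. -/
/-- Let `φ_θ = Σ_{j=0}^r α_j τ^j` (with `α_0 = θ`, `α_j ∈ A`)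
define a Drinfeld `A`-module, and let `log_φ = Σ l_n τ^n` be its logarithm,
determined by `l_0 = 1` and the recursion
`(θ − θ^{q^n}) l_n = Σ_{j=0}^{n−1} l_j α_{n−j}^{q^j}`.
Then for every `n` there is `a_n ∈ A` with `l_n = a_n / ℓ_n`,
where `ℓ_n = ∏_{k=1}^n (θ − θ^{q^k})`. -/
theorem drinfeld_log_denominators (Fq : Type*) [Field Fq] [Fintype Fq]
    (q : ℕ) (hq : q = Fintype.card Fq)
    (r : ℕ) (α : ℕ → Polynomial Fq)
    (hα0 : α 0 = Polynomial.X) (hαr : ∀ j, r < j → α j = 0)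
    (l : ℕ → RatFunc Fq) (hl0 : l 0 = 1)
    (hrec : ∀ n : ℕ, 0 < n →
      algebraMap (Polynomial Fq) (RatFunc Fq)
          (Polynomial.X - Polynomial.X ^ q ^ n) * l n =
        ∑ j ∈ Finset.range n,
          l j * (algebraMap (Polynomial Fq) (RatFunc Fq) (α (n - j))) ^ q ^ j) :
    ∀ n : ℕ, ∃ a : Polynomial Fq,
      l n = algebraMap (Polynomial Fq) (RatFunc Fq) a /
        algebraMap (Polynomial Fq) (RatFunc Fq)
          (∏ k ∈ Finset.Icc 1 n, (Polynomial.X - Polynomial.X ^ q ^ k)) := by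
  have hq2 : 2 ≤ q := by
    rw [hq]; exact Fintype.one_lt_card
  set f := algebraMap (Polynomial Fq) (RatFunc Fq) with hf
  set P : ℕ → Polynomial Fq := fun k => Polynomial.X - Polynomial.X ^ q ^ k with hPdef
  have hP : ∀ k, 1 ≤ k → P k ≠ 0 := by
    intro k hk h
    have hm : 2 ≤ q ^ k := le_trans hq2 (Nat.le_self_pow (by omega) q)
    have := congrArg (fun p => Polynomial.coeff p (q ^ k)) h
    simp only [hPdef, Polynomial.coeff_sub, Polynomial.coeff_X_pow, if_pos rfl,
      Polynomial.coeff_zero, Polynomial.coeff_X] at this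
    rw [if_neg (by omega)] at this
    simp at this
  have hL : ∀ m : ℕ, (∏ k ∈ Finset.Icc 1 m, P k) ≠ 0 := by
    intro m
    exact Finset.prod_ne_zero_iff.2 (fun k hk => hP k (Finset.mem_Icc.1 hk).1)
  have hfinj : Function.Injective f := IsFractionRing.injective (Polynomial Fq) (RatFunc Fq)
  have hfL : ∀ m : ℕ, f (∏ k ∈ Finset.Icc 1 m, P k) ≠ 0 := by
    intro m h
    exact hL m (hfinj (by simpa using h))
  intro n
  induction n using Nat.strong_induction_on with
  | _ n ih =>
    rcases Nat.eq_zero_or_pos n with h0 | hn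
    · subst h0
      exact ⟨1, by simp [hl0]⟩
    · obtain ⟨m, rfl⟩ := Nat.exists_eq_succ_of_ne_zero hn.ne'
      set a : ℕ → Polynomial Fq := fun j => if hj : j < m + 1 then (ih j hj).choose else 0
        with ha
      have haspec : ∀ j (hj : j < m + 1),
          l j = f (a j) / f (∏ k ∈ Finset.Icc 1 j, P k) := by
        intro j hj
        simp only [ha, dif_pos hj]
        exact (ih j hj).choose_spec
      refine ⟨∑ j ∈ Finset.range (m + 1),
        a j * α (m + 1 - j) ^ q ^ j * ∏ k ∈ Finset.Icc (j + 1) m, P k, ?_⟩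
      rw [eq_div_iff (hfL (m + 1))]
      have hsplit : (∏ k ∈ Finset.Icc 1 (m + 1), P k)
          = (∏ k ∈ Finset.Icc 1 m, P k) * P (m + 1) :=
        Finset.prod_Icc_succ_top (by omega) _
      have key : f (P (m + 1)) * l (m + 1) =
          ∑ j ∈ Finset.range (m + 1), l j * (f (α (m + 1 - j))) ^ q ^ j :=
        hrec (m + 1) (Nat.succ_pos m)
      calc l (m + 1) * f (∏ k ∈ Finset.Icc 1 (m + 1), P k)
          = (f (P (m + 1)) * l (m + 1)) * f (∏ k ∈ Finset.Icc 1 m, P k) := by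
            rw [hsplit, map_mul]; ring
        _ = _ := by
            rw [key, Finset.sum_mul, map_sum]
            refine Finset.sum_congr rfl ?_
            intro j hj
            have hjm : j < m + 1 := Finset.mem_range.1 hj
            have hjle : j ≤ m := by omega
            have hLsplit : (∏ k ∈ Finset.Icc 1 m, P k)
                = (∏ k ∈ Finset.Icc 1 j, P k) * ∏ k ∈ Finset.Icc (j + 1) m, P k := by
              rw [Finset.Icc_add_one_left_eq_Ioc, show Finset.Icc 1 m = Finset.Ioc 0 m by ext x; simp only [Finset.mem_Icc, Finset.mem_Ioc]; omega, show Finset.Icc 1 j = Finset.Ioc 0 j by ext x; simp only [Finset.mem_Icc, Finset.mem_Ioc]; omega]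
              exact (Finset.prod_Ioc_consecutive _ (Nat.zero_le j) hjle).symm
            rw [haspec j hjm, hLsplit]
            push_cast [map_mul, map_pow]
            field_simp
            have hB : (∏ x ∈ Finset.Icc 1 j, f (P x)) ≠ 0 := by
              rw [← map_prod]; exact hfL j
            rw [div_eq_iff (hfL j)]; ring
end

section
/- For n ≥ q with n = q + r + ℓ(q−1), ℓ ∈ ℕ, r ∈ {0,…,q−2}, the unit u_C(t₁,…,t_n;z) = exp_{φ̃}(𝓛(φ̃)) ∈ A[t₁,…,t_n,z], viewed as a polynomial in θ, has degree n·(q^ℓ−1)/(q−1) − ℓq^ℓ if r = 0, and degree n·(q^{ℓ+1}−1)/(q−1) − (ℓ+1)q^{ℓ+1} if r ≠ 0; moreover its leading coefficient in θ is (−1)^ℓ z^ℓ(1−z) if r = 0, and (−1)^{n(ℓ+1)} z^{ℓ+1} if r ≠ 0. -/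
open Polynomial

section TateAlgebraZ

variable (Fq : Type*) [Field Fq] (n : ℕ)

/- The Tate algebra `T_{n,z}(K_∞)` in the variables `t₁,…,t_n, z` is realized
as the ring of Laurent series in `u = 1/θ` with coefficients in
`F_q[t₁,…,t_n,z] = MvPolynomial (Option (Fin n)) Fq`, where `z` is the
variable indexed by `none` and `t_i` the variable indexed by `some i`. -/

/-- `θ = u⁻¹` inside `T_{n,z}(K_∞)`. -/
noncomputable def thetaTateZ : LaurentSeries (MvPolynomial (Option (Fin n)) Fq) :=
  HahnSeries.single (-1 : ℤ) 1

/-- The embedding of `A = F_q[θ]` into `T_{n,z}(K_∞)`, `a ↦ a(θ)`. -/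
noncomputable def polyToTateZ (a : Polynomial Fq) :
    LaurentSeries (MvPolynomial (Option (Fin n)) Fq) :=
  Polynomial.aeval (thetaTateZ Fq n) a

/-- `b_j(t₁)⋯b_j(t_n)` where `b_j(t) = ∏_{k<j} (t − θ^{q^k})`. -/
noncomputable def tateBProdZ (q j : ℕ) :
    LaurentSeries (MvPolynomial (Option (Fin n)) Fq) :=
  ∏ i : Fin n, ∏ k ∈ Finset.range j,
    (HahnSeries.C (MvPolynomial.X (some i)) - (thetaTateZ Fq n) ^ q ^ k)

/-- `a(t₁)⋯a(t_n)`, for `a ∈ A`. -/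
noncomputable def tateAProdZ (a : Polynomial Fq) :
    LaurentSeries (MvPolynomial (Option (Fin n)) Fq) :=
  ∏ i : Fin n, HahnSeries.C (Polynomial.aeval (MvPolynomial.X (some i)) a)

/-- the variable `z` inside `T_{n,z}(K_∞)`. -/
noncomputable def zTate : LaurentSeries (MvPolynomial (Option (Fin n)) Fq) :=
  HahnSeries.C (MvPolynomial.X none)

end TateAlgebraZ

open HahnSeries

section Core
variable {R S : Type*} [CommRing R] [IsDomain R]

/-- coefficients of `p(θ)` where `θ = single (-1) 1`. -/
lemma algebraMap_hahn [CommRing S] [Algebra S R] (b : S) :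
    algebraMap S (HahnSeries ℤ R) b = HahnSeries.C (algebraMap S R b) := by
  rw [HahnSeries.algebraMap_apply', PowerSeries.algebraMap_apply, HahnSeries.ofPowerSeries_C]

/-- coefficients of `p(θ)` where `θ = single (-1) 1`. -/
lemma coeff_aeval_theta [CommRing S] [Algebra S R] (p : S[X]) (g : ℤ) :
    (Polynomial.aeval (HahnSeries.single (-1 : ℤ) (1 : R)) p).coeff g
      = if 0 ≤ -g then algebraMap S R (p.coeff (-g).toNat) else 0 := by
  induction p using Polynomial.induction_on' with
  | add p q hp hq =>
      simp only [map_add, HahnSeries.coeff_add, hp, hq, Polynomial.coeff_add]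
      split <;> simp
  | monomial m a =>
      have h1 : (Polynomial.aeval (HahnSeries.single (-1 : ℤ) (1 : R))) (monomial m a)
          = HahnSeries.single (-(m:ℤ)) (algebraMap S R a) := by
        rw [Polynomial.aeval_monomial, algebraMap_hahn,
          HahnSeries.single_pow, one_pow, nsmul_eq_mul, mul_neg_one,
          HahnSeries.C_apply, HahnSeries.single_mul_single, zero_add, mul_one]
      rw [h1]
      rcases eq_or_ne g (-(m:ℤ)) with rfl | hne
      · rw [HahnSeries.coeff_single_same, if_pos (by simp),
          neg_neg, Int.toNat_natCast, Polynomial.coeff_monomial, if_pos rfl]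
      · rw [HahnSeries.coeff_single_of_ne hne]
        by_cases h : 0 ≤ -g
        · rw [if_pos h]
          have : (-g).toNat ≠ m := by
            intro hh; apply hne; omega
          rw [Polynomial.coeff_monomial, if_neg (fun hh => this hh.symm), map_zero]
        · rw [if_neg h]

/-- order/leadingCoeff from explicit coefficient data. -/
lemma order_lead_of_coeff {x : HahnSeries ℤ R} {o : ℤ} {c : R}
    (h1 : x.coeff o = c) (hc : c ≠ 0) (h2 : ∀ g < o, x.coeff g = 0) :
    x ≠ 0 ∧ x.order = o ∧ x.leadingCoeff = c := by
  have hx : x ≠ 0 := by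
    intro h; rw [h] at h1; simp at h1; exact hc h1.symm
  have ho : x.order = o := by
    refine le_antisymm (HahnSeries.order_le_of_coeff_ne_zero (by rw [h1]; exact hc)) ?_
    by_contra h
    push_neg at h
    exact hx (HahnSeries.coeff_order_eq_zero.mp (h2 _ h))
  exact ⟨hx, ho, by rw [HahnSeries.leadingCoeff_eq, ho, h1]⟩

lemma lead_mul {x y : HahnSeries ℤ R} (hx : x ≠ 0) (hy : y ≠ 0) :
    (x * y).leadingCoeff = x.leadingCoeff * y.leadingCoeff := by
  rw [HahnSeries.leadingCoeff_eq, HahnSeries.order_mul hx hy,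
    HahnSeries.coeff_mul_order_add_order]

lemma prod_order_lead {ι : Type*} (s : Finset ι) (f : ι → HahnSeries ℤ R)
    (hf : ∀ i ∈ s, f i ≠ 0) :
    (∏ i ∈ s, f i) ≠ 0 ∧ (∏ i ∈ s, f i).order = ∑ i ∈ s, (f i).order ∧
      (∏ i ∈ s, f i).leadingCoeff = ∏ i ∈ s, (f i).leadingCoeff := by
  classical
  induction s using Finset.induction_on with
  | empty => simp [HahnSeries.order_one, HahnSeries.leadingCoeff_one]
  | insert a s hni ih =>
      have h1 := hf a (Finset.mem_insert_self a s)
      obtain ⟨hne, ho, hl⟩ := ih (fun i hi => hf i (Finset.mem_insert_of_mem hi))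
      rw [Finset.prod_insert hni, Finset.sum_insert hni, Finset.prod_insert hni]
      exact ⟨mul_ne_zero h1 hne,
        by rw [HahnSeries.order_mul h1 hne, ho],
        by rw [lead_mul h1 hne, hl]⟩

end Core

section Blocks
variable {R S : Type*} [CommRing R] [IsDomain R]

/-- For monic `p`, `p(θ)` has order `-deg p` and leading coefficient `1`. -/
lemma monic_aeval_theta [CommRing S] [Nontrivial S] [Algebra S R] (p : S[X]) (hp : p.Monic) :
    (Polynomial.aeval (HahnSeries.single (-1 : ℤ) (1 : R)) p) ≠ 0 ∧
    (Polynomial.aeval (HahnSeries.single (-1 : ℤ) (1 : R)) p).order = -(p.natDegree : ℤ) ∧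
    (Polynomial.aeval (HahnSeries.single (-1 : ℤ) (1 : R)) p).leadingCoeff = 1 := by
  apply order_lead_of_coeff (c := (1 : R))
  · rw [coeff_aeval_theta, if_pos (by simp), neg_neg, Int.toNat_natCast, hp.coeff_natDegree,
      map_one]
  · exact one_ne_zero
  · intro g hg
    rw [coeff_aeval_theta]
    by_cases h : 0 ≤ -g
    · rw [if_pos h, Polynomial.coeff_eq_zero_of_natDegree_lt (by omega), map_zero]
    · rw [if_neg h]

lemma theta_pow_coeff (e : ℕ) (g : ℤ) :
    ((HahnSeries.single (-1 : ℤ) (1 : R)) ^ e).coeff g = if g = -(e:ℤ) then 1 else 0 := by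
  rw [HahnSeries.single_pow, one_pow, nsmul_eq_mul, mul_neg_one]
  rcases eq_or_ne g (-(e:ℤ)) with rfl | hne
  · rw [HahnSeries.coeff_single_same, if_pos rfl]
  · rw [HahnSeries.coeff_single_of_ne hne, if_neg hne]

/-- the factor `C t - θ^e` for `e ≥ 1`. -/
lemma factor_order_lead (t : R) (e : ℕ) (he : 1 ≤ e) :
    (HahnSeries.C t - (HahnSeries.single (-1 : ℤ) (1 : R)) ^ e) ≠ 0 ∧
    (HahnSeries.C t - (HahnSeries.single (-1 : ℤ) (1 : R)) ^ e).order = -(e:ℤ) ∧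
    (HahnSeries.C t - (HahnSeries.single (-1 : ℤ) (1 : R)) ^ e).leadingCoeff = -1 := by
  apply order_lead_of_coeff (c := (-1 : R))
  · rw [HahnSeries.coeff_sub, theta_pow_coeff, if_pos rfl, HahnSeries.C_apply,
      HahnSeries.coeff_single_of_ne (by omega), zero_sub]
  · exact neg_ne_zero.mpr one_ne_zero
  · intro g hg
    rw [HahnSeries.coeff_sub, theta_pow_coeff, if_neg (by omega), HahnSeries.C_apply,
      HahnSeries.coeff_single_of_ne (by omega), sub_zero]

lemma C_order_lead (t : R) (ht : t ≠ 0) :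
    (HahnSeries.C t : HahnSeries ℤ R) ≠ 0 ∧ (HahnSeries.C t : HahnSeries ℤ R).order = 0 ∧
    (HahnSeries.C t : HahnSeries ℤ R).leadingCoeff = t := by
  refine order_lead_of_coeff ?_ ht ?_
  · rw [HahnSeries.C_apply, HahnSeries.coeff_single_same]
  · intro g hg
    rw [HahnSeries.C_apply, HahnSeries.coeff_single_of_ne (by omega)]

end Blocks

section DDeg
variable {Fq : Type*} [Field Fq]

lemma D_monic_deg (q : ℕ) (hq : 2 ≤ q) (D : ℕ → Polynomial Fq) (hD0 : D 0 = 1)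
    (hD : ∀ i : ℕ, D (i + 1) = (Polynomial.X ^ q ^ (i + 1) - Polynomial.X) * (D i) ^ q) :
    ∀ j, (D j).Monic ∧ (D j).natDegree = j * q ^ j := by
  intro j
  induction j with
  | zero => simp [hD0, Polynomial.monic_one]
  | succ i ih =>
      have hqpow : 2 ≤ q ^ (i + 1) := le_trans hq (Nat.le_self_pow (by omega) q)
      have hXm : (Polynomial.X ^ q ^ (i + 1) - Polynomial.X : Polynomial Fq).Monic := by
        apply Polynomial.monic_X_pow_sub
        calc Polynomial.degree (Polynomial.X : Polynomial Fq) = 1 := Polynomial.degree_X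
        _ < ((q ^ (i+1) : ℕ) : WithBot ℕ) := by
              rw [← Nat.cast_one, Nat.cast_lt]; omega
      have hXdeg : (Polynomial.X ^ q ^ (i + 1) - Polynomial.X : Polynomial Fq).natDegree
          = q ^ (i + 1) := by
        rw [Polynomial.natDegree_sub_eq_left_of_natDegree_lt
          (by rw [Polynomial.natDegree_X, Polynomial.natDegree_X_pow]; omega)]
        exact Polynomial.natDegree_X_pow _
      constructor
      · rw [hD i]; exact hXm.mul (ih.1.pow q)
      · rw [hD i, Polynomial.Monic.natDegree_mul hXm (ih.1.pow q), hXdeg,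
          Polynomial.natDegree_pow, ih.2, pow_succ]
        ring

end DDeg


section BAZ
variable (Fq : Type*) [Field Fq] (n : ℕ)

lemma zTate_pow_order_lead (e : ℕ) :
    (zTate Fq n) ^ e ≠ 0 ∧ ((zTate Fq n) ^ e).order = 0 ∧
      ((zTate Fq n) ^ e).leadingCoeff = (MvPolynomial.X none) ^ e := by
  have : (zTate Fq n) ^ e = HahnSeries.C ((MvPolynomial.X none : MvPolynomial (Option (Fin n)) Fq) ^ e) := by
    rw [zTate, ← map_pow]
  rw [this]
  exact C_order_lead _ (pow_ne_zero _ (MvPolynomial.X_ne_zero _))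

lemma tateB_order_lead (q j : ℕ) (hq : 1 ≤ q) :
    tateBProdZ Fq n q j ≠ 0 ∧
      (tateBProdZ Fq n q j).order = -((n * ∑ k ∈ Finset.range j, q ^ k : ℕ) : ℤ) ∧
      (tateBProdZ Fq n q j).leadingCoeff = (-1) ^ (n * j) := by
  have hinner : ∀ i : Fin n,
      (∏ k ∈ Finset.range j, (HahnSeries.C (MvPolynomial.X (some i)) - (thetaTateZ Fq n) ^ q ^ k)) ≠ 0 ∧
      (∏ k ∈ Finset.range j, (HahnSeries.C (MvPolynomial.X (some i)) - (thetaTateZ Fq n) ^ q ^ k)).order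
        = -((∑ k ∈ Finset.range j, q ^ k : ℕ) : ℤ) ∧
      (∏ k ∈ Finset.range j, (HahnSeries.C (MvPolynomial.X (some i)) - (thetaTateZ Fq n) ^ q ^ k)).leadingCoeff
        = (-1) ^ j := by
    intro i
    have hfac := fun k (_ : k ∈ Finset.range j) =>
      factor_order_lead (MvPolynomial.X (some i) : MvPolynomial (Option (Fin n)) Fq) (q ^ k)
        (Nat.one_le_pow _ _ (by omega))
    obtain ⟨h0, h1, h2⟩ := prod_order_lead (Finset.range j) _ (fun k hk => (hfac k hk).1)
    rw [thetaTateZ]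
    refine ⟨h0, ?_, ?_⟩
    · rw [h1, Finset.sum_congr rfl (fun k hk => (hfac k hk).2.1)]
      push_cast
      rw [Finset.sum_neg_distrib]
    · rw [h2, Finset.prod_congr rfl (fun k hk => (hfac k hk).2.2), Finset.prod_const,
        Finset.card_range]
  obtain ⟨h0, h1, h2⟩ := prod_order_lead Finset.univ _ (fun i _ => (hinner i).1)
  rw [tateBProdZ]
  refine ⟨h0, ?_, ?_⟩
  · rw [h1, Finset.sum_congr rfl (fun i _ => (hinner i).2.1), Finset.sum_const, Finset.card_univ,
      Fintype.card_fin]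
    push_cast
    ring
  · rw [h2, Finset.prod_congr rfl (fun i _ => (hinner i).2.2), Finset.prod_const,
      Finset.card_univ, Fintype.card_fin, ← pow_mul, mul_comm j n]

lemma tateA_order_lead (a : Polynomial Fq) (ha : a ≠ 0) :
    tateAProdZ Fq n a ≠ 0 ∧ (tateAProdZ Fq n a).order = 0 ∧
      (tateAProdZ Fq n a).leadingCoeff
        = ∏ i : Fin n, Polynomial.aeval (MvPolynomial.X (some i)) a := by
  have heq : tateAProdZ Fq n a
      = HahnSeries.C (∏ i : Fin n, Polynomial.aeval (MvPolynomial.X (some i) :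
          MvPolynomial (Option (Fin n)) Fq) a) := by
    rw [tateAProdZ, map_prod]
  have hne : ∀ i : Fin n,
      Polynomial.aeval (MvPolynomial.X (some i) : MvPolynomial (Option (Fin n)) Fq) a ≠ 0 := by
    intro i h
    apply ha
    have := congrArg (MvPolynomial.aeval
      (fun o : Option (Fin n) => if o = some i then (Polynomial.X : Polynomial Fq) else 0)) h
    rw [map_zero, ← Polynomial.aeval_algHom_apply] at this
    simpa using this
  rw [heq]
  exact C_order_lead _ (Finset.prod_ne_zero_iff.mpr (fun i _ => hne i))

end BAZ

section Key

lemma key_natDegree_lead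
    (Fq : Type*) [Field Fq]
    (q : ℕ) (hq2 : 2 ≤ q)
    (n : ℕ)
    (D : ℕ → Polynomial Fq) (hD0 : D 0 = 1)
    (hD : ∀ i : ℕ, D (i + 1) = (Polynomial.X ^ q ^ (i + 1) - Polynomial.X) * (D i) ^ q)
    (G : HahnSeries.SummableFamily ℤ (MvPolynomial (Option (Fin n)) Fq) (ℕ × Polynomial Fq))
    (hG : ∀ (j : ℕ) (a : Polynomial Fq), a.Monic →
      polyToTateZ Fq n (D j) * (polyToTateZ Fq n a) ^ q ^ j * G (j, a) =
        tateBProdZ Fq n q j * tateAProdZ Fq n a * (zTate Fq n) ^ (j + a.natDegree))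
    (hG' : ∀ (j : ℕ) (a : Polynomial Fq), ¬ a.Monic → G (j, a) = 0)
    (u : Polynomial (MvPolynomial (Option (Fin n)) Fq))
    (hu : Polynomial.aeval (thetaTateZ Fq n) u = G.hsum)
    (M : Finset ℕ) (N : ℕ)
    (hM : ∀ j ∈ M,
      ((j : ℤ) + 0) * q ^ j - n * (∑ k ∈ Finset.range j, q ^ k : ℕ) = -(N : ℤ))
    (hmin : ∀ j d : ℕ,
      -(N : ℤ) ≤ ((j : ℤ) + d) * q ^ j - n * (∑ k ∈ Finset.range j, q ^ k : ℕ))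
    (hstrict : ∀ j d : ℕ, (j ∉ M ∨ d ≠ 0) →
      -(N : ℤ) < ((j : ℤ) + d) * q ^ j - n * (∑ k ∈ Finset.range j, q ^ k : ℕ))
    (hc : (∑ j ∈ M, (-1 : MvPolynomial (Option (Fin n)) Fq) ^ (n * j)
        * (MvPolynomial.X none) ^ j) ≠ 0) :
    u.natDegree = N ∧
      u.leadingCoeff = ∑ j ∈ M, (-1) ^ (n * j) * (MvPolynomial.X none) ^ j := by
  classical
  have hth : thetaTateZ Fq n
      = HahnSeries.single (-1 : ℤ) (1 : MvPolynomial (Option (Fin n)) Fq) := rfl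
  -- order and leading coefficient of each G (j, a)
  have hGfact : ∀ (j : ℕ) (a : Polynomial Fq), a.Monic →
      G (j, a) ≠ 0 ∧
      (G (j, a)).order = ((j : ℤ) + a.natDegree) * q ^ j
          - n * (∑ k ∈ Finset.range j, q ^ k : ℕ) ∧
      (G (j, a)).leadingCoeff = (-1) ^ (n * j)
          * (∏ i : Fin n, Polynomial.aeval (MvPolynomial.X (some i)) a)
          * (MvPolynomial.X none) ^ (j + a.natDegree) := by
    intro j a ha
    obtain ⟨hDm, hDdeg⟩ := D_monic_deg q hq2 D hD0 hD j
    have hPm : (D j * a ^ q ^ j).Monic := hDm.mul (ha.pow _)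
    have hPdeg : (D j * a ^ q ^ j).natDegree = j * q ^ j + a.natDegree * q ^ j := by
      rw [Polynomial.Monic.natDegree_mul hDm (ha.pow _), hDdeg, Polynomial.natDegree_pow]
      ring
    obtain ⟨hPne, hPo, hPl⟩ := monic_aeval_theta (R := MvPolynomial (Option (Fin n)) Fq)
      (D j * a ^ q ^ j) hPm
    have hPmul : polyToTateZ Fq n (D j * a ^ q ^ j)
        = polyToTateZ Fq n (D j) * (polyToTateZ Fq n a) ^ q ^ j := by
      simp [polyToTateZ, map_mul, map_pow]
    have hE : polyToTateZ Fq n (D j * a ^ q ^ j) * G (j, a)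
        = tateBProdZ Fq n q j * tateAProdZ Fq n a * (zTate Fq n) ^ (j + a.natDegree) := by
      rw [hPmul]; exact hG j a ha
    obtain ⟨hB0, hBo, hBl⟩ := tateB_order_lead Fq n q j (by omega)
    obtain ⟨hA0, hAo, hAl⟩ := tateA_order_lead Fq n a ha.ne_zero
    obtain ⟨hz0, hzo, hzl⟩ := zTate_pow_order_lead Fq n (j + a.natDegree)
    have hRHS0 : tateBProdZ Fq n q j * tateAProdZ Fq n a
        * (zTate Fq n) ^ (j + a.natDegree) ≠ 0 :=
      mul_ne_zero (mul_ne_zero hB0 hA0) hz0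
    have hPne' : polyToTateZ Fq n (D j * a ^ q ^ j) ≠ 0 := by
      rw [polyToTateZ, hth]; exact hPne
    have hGne : G (j, a) ≠ 0 := by
      intro h0
      rw [h0, mul_zero] at hE
      exact hRHS0 hE.symm
    have hRHSo : (tateBProdZ Fq n q j * tateAProdZ Fq n a
        * (zTate Fq n) ^ (j + a.natDegree)).order
        = -((n * ∑ k ∈ Finset.range j, q ^ k : ℕ) : ℤ) := by
      rw [HahnSeries.order_mul (mul_ne_zero hB0 hA0) hz0, HahnSeries.order_mul hB0 hA0,
        hBo, hAo, hzo]
      ring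
    have hRHSl : (tateBProdZ Fq n q j * tateAProdZ Fq n a
        * (zTate Fq n) ^ (j + a.natDegree)).leadingCoeff
        = (-1) ^ (n * j) * (∏ i : Fin n, Polynomial.aeval (MvPolynomial.X (some i)) a)
          * (MvPolynomial.X none) ^ (j + a.natDegree) := by
      rw [lead_mul (mul_ne_zero hB0 hA0) hz0, lead_mul hB0 hA0, hBl, hAl, hzl]
    have horder : (G (j, a)).order = ((j : ℤ) + a.natDegree) * q ^ j
        - n * (∑ k ∈ Finset.range j, q ^ k : ℕ) := by
      have := HahnSeries.order_mul hPne' hGne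
      rw [hE, hRHSo] at this
      rw [polyToTateZ, hth] at this
      rw [hPo, hPdeg] at this
      push_cast at this ⊢
      linarith
    have hlead : (G (j, a)).leadingCoeff = (-1) ^ (n * j)
        * (∏ i : Fin n, Polynomial.aeval (MvPolynomial.X (some i)) a)
        * (MvPolynomial.X none) ^ (j + a.natDegree) := by
      have := lead_mul hPne' hGne
      rw [hE, hRHSl] at this
      rw [polyToTateZ, hth, hPl, one_mul] at this
      exact this.symm
    exact ⟨hGne, horder, hlead⟩
  -- hsum coefficients
  have hcoeff_lt : ∀ g : ℤ, g < -(N : ℤ) → G.hsum.coeff g = 0 := by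
    intro g hg
    rw [HahnSeries.SummableFamily.coeff_hsum]
    apply finsum_eq_zero_of_forall_eq_zero
    rintro ⟨j, a⟩
    by_cases ham : a.Monic
    · obtain ⟨_, ho, _⟩ := hGfact j a ham
      have : g < (G (j, a)).order := by
        rw [ho]; exact lt_of_lt_of_le hg (hmin j a.natDegree)
      exact HahnSeries.coeff_eq_zero_of_lt_order this
    · simp [hG' j a ham]
  have hcoeffN : G.hsum.coeff (-(N : ℤ))
      = ∑ j ∈ M, (-1) ^ (n * j) * (MvPolynomial.X none) ^ j := by
    rw [HahnSeries.SummableFamily.coeff_hsum]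
    have hsupp : (Function.support fun p : ℕ × Polynomial Fq => (G p).coeff (-(N : ℤ)))
        ⊆ ↑(M.image (fun j => (j, (1 : Polynomial Fq)))) := by
      rintro ⟨j, a⟩ hp
      simp only [Function.mem_support] at hp
      have ham : a.Monic := by
        by_contra h
        rw [hG' j a h, HahnSeries.coeff_zero] at hp
        exact hp rfl
      obtain ⟨hne, ho, _⟩ := hGfact j a ham
      have hle : (G (j, a)).order ≤ -(N : ℤ) := by
        by_contra h
        exact hp (HahnSeries.coeff_eq_zero_of_lt_order (by omega))
      have hjM : j ∈ M ∧ a.natDegree = 0 := by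
        by_contra h
        have := hstrict j a.natDegree (by tauto)
        rw [ho] at hle
        omega
      have ha1 : a = 1 := ham.natDegree_eq_zero.mp hjM.2
      simp only [Finset.coe_image, Set.mem_image, Finset.mem_coe]
      exact ⟨j, hjM.1, by rw [ha1]⟩
    rw [finsum_eq_sum_of_support_subset _ hsupp]
    rw [Finset.sum_image (by intro x _ y _ h; exact (Prod.mk.injEq _ _ _ _).mp h |>.1)]
    apply Finset.sum_congr rfl
    intro j hj
    obtain ⟨hne, ho, hl⟩ := hGfact j 1 Polynomial.monic_one
    have ho' : (G (j, (1 : Polynomial Fq))).order = -(N : ℤ) := by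
      rw [ho, Polynomial.natDegree_one]
      exact_mod_cast hM j hj
    rw [← ho', ← HahnSeries.leadingCoeff_eq, hl, Polynomial.natDegree_one]
    simp
  -- transfer to u
  have hucoeff : ∀ k : ℕ, u.coeff k = G.hsum.coeff (-(k : ℤ)) := by
    intro k
    have h := congrArg (fun x => HahnSeries.coeff x (-(k : ℤ))) hu
    simp only [hth] at h
    rw [coeff_aeval_theta, if_pos (by omega), neg_neg, Int.toNat_natCast] at h
    rw [← h]
    simp [Algebra.algebraMap_self]
  have hdeg : u.natDegree = N := by
    apply le_antisymm
    · rw [Polynomial.natDegree_le_iff_coeff_eq_zero]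
      intro k hk
      rw [hucoeff]
      exact hcoeff_lt _ (by exact_mod_cast neg_lt_neg (Nat.cast_lt.mpr hk))
    · apply Polynomial.le_natDegree_of_ne_zero
      rw [hucoeff, hcoeffN]
      exact hc
  refine ⟨hdeg, ?_⟩
  rw [Polynomial.leadingCoeff, hdeg, hucoeff, hcoeffN]

end Key

section Arith

lemma upchain (f : ℕ → ℤ) (m : ℕ) (h : ∀ j, m ≤ j → f j < f (j + 1)) :
    ∀ j, m < j → f m < f j := by
  intro j hj
  induction j with
  | zero => omega
  | succ k ih =>
      rcases eq_or_lt_of_le (Nat.lt_succ_iff.mp hj) with rfl | hlt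
      · exact h m le_rfl
      · exact lt_trans (ih hlt) (h k (by omega))

lemma downchain (f : ℕ → ℤ) (m : ℕ) (h : ∀ j, j < m → f (j + 1) < f j) :
    ∀ j, j < m → f m < f j := by
  induction m with
  | zero => omega
  | succ k ih =>
      intro j hj
      have hk : f (k + 1) < f k := h k (by omega)
      rcases eq_or_lt_of_le (Nat.lt_succ_iff.mp hj) with rfl | hlt
      · exact hk
      · exact lt_trans hk (ih (fun i hi => h i (by omega)) j hlt)

/-- the order function `g(j) = j q^j - n S_j`. -/
def gzAux (q n j : ℕ) : ℤ := (j : ℤ) * q ^ j - n * (∑ k ∈ Finset.range j, q ^ k : ℕ)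

lemma gzAux_zero (q n : ℕ) : gzAux q n 0 = 0 := by simp [gzAux]

lemma gzAux_step (q n r ℓ : ℕ) (hq1 : 1 ≤ q) (hnrl : n = q + r + ℓ * (q - 1)) (j : ℕ) :
    gzAux q n (j + 1) = gzAux q n j
      + (q : ℤ) ^ j * ((j : ℤ) * ((q : ℤ) - 1) - ((r : ℤ) + (ℓ : ℤ) * ((q : ℤ) - 1))) := by
  have hnZ : (n : ℤ) = q + r + ℓ * ((q : ℤ) - 1) := by
    rw [hnrl]; push_cast [Nat.cast_sub hq1]; ring
  rw [gzAux, gzAux, Finset.sum_range_succ]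
  push_cast
  linear_combination (-(q : ℤ) ^ j) * hnZ

lemma geom_nat (q : ℕ) (hq1 : 1 ≤ q) (m : ℕ) :
    (q - 1) * (∑ k ∈ Finset.range m, q ^ k) = q ^ m - 1 := by
  induction m with
  | zero => simp
  | succ k ih =>
      have h1 : 1 ≤ q ^ k := Nat.one_le_pow _ _ (by omega)
      have hle : q ^ k ≤ q ^ (k + 1) := Nat.pow_le_pow_right (by omega) (by omega)
      have hsub : (q - 1) * q ^ k = q ^ (k + 1) - q ^ k := by
        rw [Nat.sub_mul, one_mul, pow_succ, mul_comm]
      rw [Finset.sum_range_succ, Nat.mul_add, ih, hsub]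
      omega

lemma sum_geom_div (q : ℕ) (hq : 2 ≤ q) (m : ℕ) :
    (∑ k ∈ Finset.range m, q ^ k) = (q ^ m - 1) / (q - 1) :=
  (Nat.div_eq_of_eq_mul_left (by omega)
    (by rw [mul_comm]; exact (geom_nat q (by omega) m).symm)).symm

end Arith

section CharLemma

lemma neg_one_pow_sum (Fq : Type*) [Field Fq] [Fintype Fq]
    (q : ℕ) (hq : q = Fintype.card Fq) (hq2 : 2 ≤ q)
    (n ℓ : ℕ) (hn : n = q + ℓ * (q - 1)) (σ : Type*) (x : MvPolynomial σ Fq) :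
    (-1 : MvPolynomial σ Fq) ^ (n * ℓ) * x ^ ℓ + (-1) ^ (n * (ℓ + 1)) * x ^ (ℓ + 1)
      = (-1) ^ ℓ * x ^ ℓ * (1 - x) := by
  rcases Nat.even_or_odd q with hqe | hqo
  · -- even q : characteristic 2
    set p := ringChar Fq with hpdef
    obtain ⟨f, hp, hcard⟩ := FiniteField.card Fq p
    have hqp : q = p ^ (f : ℕ) := by rw [hq, hcard]
    have hpe : Even p := by
      have : Even (p ^ (f : ℕ)) := hqp ▸ hqe
      exact (Nat.even_pow.mp this).1
    have hp2 : p = 2 := (Nat.Prime.even_iff hp).mp hpe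
    have h2Fq : (2 : Fq) = 0 := by
      have := CharP.cast_eq_zero Fq p
      rw [hp2] at this
      exact_mod_cast this
    have h2 : (2 : MvPolynomial σ Fq) = 0 := by
      rw [← map_ofNat (MvPolynomial.C : Fq →+* MvPolynomial σ Fq) 2, h2Fq, map_zero]
    have hneg : ∀ y : MvPolynomial σ Fq, -y = y := by
      intro y
      have hy : y + y = 0 := by rw [← two_mul, h2, zero_mul]
      exact neg_eq_of_add_eq_zero_left hy
    rw [show (-1 : MvPolynomial σ Fq) = 1 from hneg 1, one_pow, one_pow, one_pow,
      sub_eq_add_neg, hneg x]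
    ring
  · -- odd q : n is odd
    have heq1 : Even (q - 1) := Nat.Odd.sub_odd hqo odd_one
    have hnodd : Odd n := by
      rw [hn]
      exact hqo.add_even (heq1.mul_left ℓ)
    have h1 : (-1 : MvPolynomial σ Fq) ^ n = -1 := hnodd.neg_one_pow
    rw [pow_mul, pow_mul, h1]
    ring

end CharLemma

section MinLemmas

lemma gz_min_r0 (q n ℓ : ℕ) (hq2 : 2 ≤ q) (hnrl : n = q + 0 + ℓ * (q - 1)) :
    gzAux q n (ℓ + 1) = gzAux q n ℓ ∧ (∀ j, gzAux q n ℓ ≤ gzAux q n j) ∧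
      (∀ j, j ≠ ℓ → j ≠ ℓ + 1 → gzAux q n ℓ < gzAux q n j) := by
  have hqpow : ∀ j : ℕ, (0 : ℤ) < (q : ℤ) ^ j := fun j => by positivity
  have hstep0 := gzAux_step q n 0 ℓ (by omega) hnrl
  have hstep : ∀ j : ℕ, gzAux q n (j + 1) = gzAux q n j
      + (q : ℤ) ^ j * ((j : ℤ) * ((q : ℤ) - 1) - (ℓ : ℤ) * ((q : ℤ) - 1)) := by
    intro j; rw [hstep0 j]; push_cast; ring
  have hqZ : (1 : ℤ) ≤ (q : ℤ) - 1 := by omega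
  have hdec : ∀ j, j < ℓ → gzAux q n (j + 1) < gzAux q n j := by
    intro j hj
    rw [hstep j]
    have h2 : (j : ℤ) * ((q : ℤ) - 1) - (ℓ : ℤ) * ((q : ℤ) - 1) < 0 := by
      have hj' : (j : ℤ) + 1 ≤ (ℓ : ℤ) := by exact_mod_cast hj
      nlinarith [mul_pos (show (0 : ℤ) < (ℓ : ℤ) - j by linarith)
        (show (0 : ℤ) < (q : ℤ) - 1 by linarith)]
    have := mul_neg_of_pos_of_neg (hqpow j) h2
    linarith
  have hinc : ∀ j, ℓ + 1 ≤ j → gzAux q n j < gzAux q n (j + 1) := by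
    intro j hj
    rw [hstep j]
    have h2 : (0 : ℤ) < (j : ℤ) * ((q : ℤ) - 1) - (ℓ : ℤ) * ((q : ℤ) - 1) := by
      have hj' : (ℓ : ℤ) + 1 ≤ (j : ℤ) := by exact_mod_cast hj
      nlinarith [mul_pos (show (0 : ℤ) < (j : ℤ) - ℓ by linarith)
        (show (0 : ℤ) < (q : ℤ) - 1 by linarith)]
    have := mul_pos (hqpow j) h2
    linarith
  have hflat : gzAux q n (ℓ + 1) = gzAux q n ℓ := by
    rw [hstep ℓ]; ring
  refine ⟨hflat, ?_, ?_⟩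
  · intro j
    rcases lt_trichotomy j ℓ with h | h | h
    · exact le_of_lt (downchain _ ℓ hdec j h)
    · exact h ▸ le_rfl
    · rcases eq_or_lt_of_le (Nat.succ_le_of_lt h) with rfl | h'
      · exact le_of_eq hflat.symm
      · exact hflat ▸ le_of_lt (upchain _ (ℓ + 1) hinc j h')
  · intro j h1 h2
    rcases lt_trichotomy j ℓ with h | h | h
    · exact downchain _ ℓ hdec j h
    · omega
    · have h' : ℓ + 1 < j := by omega
      exact hflat ▸ upchain _ (ℓ + 1) hinc j h'

lemma gz_min_r1 (q n r ℓ : ℕ) (hq2 : 2 ≤ q) (hr1 : 1 ≤ r) (hrq : r ≤ q - 2)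
    (hnrl : n = q + r + ℓ * (q - 1)) :
    (∀ j, gzAux q n (ℓ + 1) ≤ gzAux q n j) ∧
      (∀ j, j ≠ ℓ + 1 → gzAux q n (ℓ + 1) < gzAux q n j) := by
  have hqpow : ∀ j : ℕ, (0 : ℤ) < (q : ℤ) ^ j := fun j => by positivity
  have hstep := gzAux_step q n r ℓ (by omega) hnrl
  have hr1' : (1 : ℤ) ≤ (r : ℤ) := by omega
  have hrq' : (r : ℤ) ≤ (q : ℤ) - 2 := by omega
  have hdec : ∀ j, j < ℓ + 1 → gzAux q n (j + 1) < gzAux q n j := by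
    intro j hj
    rw [hstep j]
    have h2 : (j : ℤ) * ((q : ℤ) - 1) - ((r : ℤ) + (ℓ : ℤ) * ((q : ℤ) - 1)) < 0 := by
      have hj' : (j : ℤ) ≤ (ℓ : ℤ) := by exact_mod_cast Nat.lt_succ_iff.mp hj
      nlinarith [mul_nonneg (show (0 : ℤ) ≤ (ℓ : ℤ) - j by linarith)
        (show (0 : ℤ) ≤ (q : ℤ) - 1 by linarith)]
    have := mul_neg_of_pos_of_neg (hqpow j) h2
    linarith
  have hinc : ∀ j, ℓ + 1 ≤ j → gzAux q n j < gzAux q n (j + 1) := by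
    intro j hj
    rw [hstep j]
    have h2 : (0 : ℤ) < (j : ℤ) * ((q : ℤ) - 1) - ((r : ℤ) + (ℓ : ℤ) * ((q : ℤ) - 1)) := by
      have hj' : (ℓ : ℤ) + 1 ≤ (j : ℤ) := by exact_mod_cast hj
      nlinarith [mul_le_mul_of_nonneg_right (show (1 : ℤ) ≤ (j : ℤ) - ℓ by linarith)
        (show (0 : ℤ) ≤ (q : ℤ) - 1 by linarith)]
    have := mul_pos (hqpow j) h2
    linarith
  constructor
  · intro j
    rcases lt_trichotomy j (ℓ + 1) with h | h | h
    · exact le_of_lt (downchain _ (ℓ + 1) hdec j h)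
    · exact h ▸ le_rfl
    · exact le_of_lt (upchain _ (ℓ + 1) hinc j h)
  · intro j h1
    rcases lt_trichotomy j (ℓ + 1) with h | h | h
    · exact downchain _ (ℓ + 1) hdec j h
    · omega
    · exact upchain _ (ℓ + 1) hinc j h

end MinLemmas

section Key2

lemma key2
    (Fq : Type*) [Field Fq]
    (q : ℕ) (hq2 : 2 ≤ q)
    (n : ℕ)
    (D : ℕ → Polynomial Fq) (hD0 : D 0 = 1)
    (hD : ∀ i : ℕ, D (i + 1) = (Polynomial.X ^ q ^ (i + 1) - Polynomial.X) * (D i) ^ q)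
    (G : HahnSeries.SummableFamily ℤ (MvPolynomial (Option (Fin n)) Fq) (ℕ × Polynomial Fq))
    (hG : ∀ (j : ℕ) (a : Polynomial Fq), a.Monic →
      polyToTateZ Fq n (D j) * (polyToTateZ Fq n a) ^ q ^ j * G (j, a) =
        tateBProdZ Fq n q j * tateAProdZ Fq n a * (zTate Fq n) ^ (j + a.natDegree))
    (hG' : ∀ (j : ℕ) (a : Polynomial Fq), ¬ a.Monic → G (j, a) = 0)
    (u : Polynomial (MvPolynomial (Option (Fin n)) Fq))
    (hu : Polynomial.aeval (thetaTateZ Fq n) u = G.hsum)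
    (M : Finset ℕ) (m : ℕ)
    (hMeq : ∀ j ∈ M, gzAux q n j = gzAux q n m)
    (hall : ∀ j, gzAux q n m ≤ gzAux q n j)
    (hstrict : ∀ j, j ∉ M → gzAux q n m < gzAux q n j)
    (hc : (∑ j ∈ M, (-1 : MvPolynomial (Option (Fin n)) Fq) ^ (n * j)
        * (MvPolynomial.X none) ^ j) ≠ 0) :
    u.natDegree = n * ((q ^ m - 1) / (q - 1)) - m * q ^ m ∧
      u.leadingCoeff = ∑ j ∈ M, (-1) ^ (n * j) * (MvPolynomial.X none) ^ j := by
  have hqpow : ∀ j : ℕ, (0 : ℤ) < (q : ℤ) ^ j := fun j => by positivity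
  have hform : ∀ j d : ℕ,
      ((j : ℤ) + d) * q ^ j - n * (∑ k ∈ Finset.range j, q ^ k : ℕ)
        = gzAux q n j + d * q ^ j := by
    intro j d; rw [gzAux]; ring
  have hle0 : gzAux q n m ≤ 0 := (gzAux_zero q n) ▸ hall 0
  have hleN : m * q ^ m ≤ n * (∑ k ∈ Finset.range m, q ^ k) := by
    rw [gzAux] at hle0
    have h2 : ((m * q ^ m : ℕ) : ℤ) ≤ ((n * (∑ k ∈ Finset.range m, q ^ k) : ℕ) : ℤ) := by
      push_cast at hle0 ⊢
      linarith
    exact_mod_cast h2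
  have hNcast : ((n * (∑ k ∈ Finset.range m, q ^ k) - m * q ^ m : ℕ) : ℤ)
      = -(gzAux q n m) := by
    rw [gzAux, Nat.cast_sub hleN]; push_cast; ring
  obtain ⟨hdeg, hlead⟩ := key_natDegree_lead Fq q hq2 n D hD0 hD G hG hG' u hu
    M (n * (∑ k ∈ Finset.range m, q ^ k) - m * q ^ m)
    (by
      intro j hj
      have h1 := hform j 0
      rw [hNcast]
      simp only [Nat.cast_zero, add_zero, zero_mul] at h1 ⊢
      linarith [hMeq j hj, h1])
    (by
      intro j d
      rw [hform, hNcast]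
      have h2 : (0 : ℤ) ≤ (d : ℤ) * (q : ℤ) ^ j := by positivity
      linarith [hall j])
    (by
      intro j d hjd
      rw [hform, hNcast]
      rcases hjd with hj | hd
      · have h2 : (0 : ℤ) ≤ (d : ℤ) * (q : ℤ) ^ j := by positivity
        linarith [hstrict j hj]
      · have h2 : (1 : ℤ) ≤ (d : ℤ) * (q : ℤ) ^ j := by
          have : (1 : ℤ) ≤ (d : ℤ) := by exact_mod_cast Nat.one_le_iff_ne_zero.mpr hd
          nlinarith [hqpow j]
        linarith [hall j])
    hc
  exact ⟨by rw [hdeg, sum_geom_div q hq2], hlead⟩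

end Key2



/-- For `n ≥ q`, write `n = q + r + ℓ(q−1)` with `ℓ ∈ ℕ`,
`r ∈ {0,…,q−2}`.  The unit `u_C(t₁,…,t_n;z) = exp_{φ̃}(𝓛(φ̃)) ∈ A[t₁,…,t_n,z]`
(where `φ̃_θ = (t₁−θ)⋯(t_n−θ)zτ + θ`,
`exp_{φ̃} = Σ_j b_j(t₁)⋯b_j(t_n) z^j τ^j / D_j`, and
`𝓛(φ̃) = Σ_{a monic} a(t₁)⋯a(t_n) z^{deg a}/a`), viewed as a polynomial in
`θ`, has degree `n(q^ℓ−1)/(q−1) − ℓq^ℓ` if `r = 0` and degree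
`n(q^{ℓ+1}−1)/(q−1) − (ℓ+1)q^{ℓ+1}` if `r ≠ 0`; moreover its leading
coefficient in `θ` is `(−1)^ℓ z^ℓ (1−z)` if `r = 0`, and
`(−1)^{n(ℓ+1)} z^{ℓ+1}` if `r ≠ 0`.

Here `exp_{φ̃}(𝓛(φ̃))` is the sum of the summable family with terms
`b_j(t₁)⋯b_j(t_n)·a(t₁)⋯a(t_n)·z^{j+deg a}/(D_j·a^{q^j})` (`j ≥ 0`, `a`
monic), and `u` is the polynomial in `θ` over `F_q[t₁,…,t_n,z]` representing
this sum. -/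
theorem unit_uC_degree_and_leading_coeff
    (Fq : Type*) [Field Fq] [Fintype Fq]
    (q : ℕ) (hq : q = Fintype.card Fq)
    (n r ℓ : ℕ) (hn : q ≤ n) (hr : r ≤ q - 2) (hnrl : n = q + r + ℓ * (q - 1))
    (D : ℕ → Polynomial Fq) (hD0 : D 0 = 1)
    (hD : ∀ i : ℕ, D (i + 1) =
      (Polynomial.X ^ q ^ (i + 1) - Polynomial.X) * (D i) ^ q)
    (G : HahnSeries.SummableFamily ℤ (MvPolynomial (Option (Fin n)) Fq)
      (ℕ × Polynomial Fq))
    (hG : ∀ (j : ℕ) (a : Polynomial Fq), a.Monic →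
      polyToTateZ Fq n (D j) * (polyToTateZ Fq n a) ^ q ^ j * G (j, a) =
        tateBProdZ Fq n q j * tateAProdZ Fq n a *
          (zTate Fq n) ^ (j + a.natDegree))
    (hG' : ∀ (j : ℕ) (a : Polynomial Fq), ¬ a.Monic → G (j, a) = 0)
    (u : Polynomial (MvPolynomial (Option (Fin n)) Fq))
    (hu : Polynomial.aeval (thetaTateZ Fq n) u = G.hsum) :
    (r = 0 →
      u.natDegree = n * ((q ^ ℓ - 1) / (q - 1)) - ℓ * q ^ ℓ ∧
        u.leadingCoeff =
          (-1) ^ ℓ * (MvPolynomial.X none) ^ ℓ * (1 - MvPolynomial.X none)) ∧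
    (r ≠ 0 →
      u.natDegree = n * ((q ^ (ℓ + 1) - 1) / (q - 1)) - (ℓ + 1) * q ^ (ℓ + 1) ∧
        u.leadingCoeff =
          (-1) ^ (n * (ℓ + 1)) * (MvPolynomial.X none) ^ (ℓ + 1)) := by
  classical
  have hq2 : 2 ≤ q := by rw [hq]; exact Fintype.one_lt_card
  constructor
  · -- case r = 0
    intro hr0
    subst hr0
    obtain ⟨hflat, hall, hstrictj⟩ := gz_min_r0 q n ℓ hq2 hnrl
    have hc' : (∑ j ∈ ({ℓ, ℓ + 1} : Finset ℕ),
        (-1 : MvPolynomial (Option (Fin n)) Fq) ^ (n * j) * (MvPolynomial.X none) ^ j)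
          = (-1) ^ ℓ * (MvPolynomial.X none) ^ ℓ * (1 - MvPolynomial.X none) := by
      rw [Finset.sum_pair (by omega : ℓ ≠ ℓ + 1),
        neg_one_pow_sum Fq q hq hq2 n ℓ (by omega) _ (MvPolynomial.X none)]
    obtain ⟨hdeg, hlead⟩ := key2 Fq q hq2 n D hD0 hD G hG hG' u hu
      ({ℓ, ℓ + 1} : Finset ℕ) ℓ
      (by
        intro j hj
        have hj' : j = ℓ ∨ j = ℓ + 1 := by simpa using hj
        rcases hj' with rfl | rfl
        · rfl
        · exact hflat)
      hall
      (by
        intro j hj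
        exact hstrictj j (fun h => hj (by simp [h])) (fun h => hj (by simp [h])))
      (by
        rw [hc']
        apply mul_ne_zero (mul_ne_zero _ _)
        · rw [sub_ne_zero]
          intro h
          have := congrArg MvPolynomial.constantCoeff h
          simp at this
        · exact pow_ne_zero _ (neg_ne_zero.mpr one_ne_zero)
        · exact pow_ne_zero _ (MvPolynomial.X_ne_zero _))
    exact ⟨hdeg, by rw [hlead, hc']⟩
  · -- case r ≠ 0
    intro hr0
    obtain ⟨hall, hstrictj⟩ := gz_min_r1 q n r ℓ hq2 (by omega) hr hnrl
    obtain ⟨hdeg, hlead⟩ := key2 Fq q hq2 n D hD0 hD G hG hG' u hu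
      ({ℓ + 1} : Finset ℕ) (ℓ + 1)
      (by
        intro j hj
        have hj' : j = ℓ + 1 := by simpa using hj
        rw [hj'])
      hall
      (by
        intro j hj
        exact hstrictj j (by simpa using hj))
      (by
        rw [Finset.sum_singleton]
        exact mul_ne_zero (pow_ne_zero _ (neg_ne_zero.mpr one_ne_zero))
          (pow_ne_zero _ (MvPolynomial.X_ne_zero _)))
    exact ⟨hdeg, by rw [hlead, Finset.sum_singleton]⟩
end

section
/- Let n ≥ 2, A = F_q[θ], and φ the canonical deformation of a rank-r Drinfeld module over A[t₁,…,t_n]. Write φ_{θ^k} = Σ_{j=0}^{k}[θ^k, j]τ^j with [θ^k,j] ∈ A[t₁,…,t_n]. Then deg_θ[θ^k,j] = q^j(k−j) + n(q^j −1)/(q−1), and the leading coefficient of [θ^k,j] as a polynomial in θ lies in F_q^×; in particular deg_θ[θ^k,k] > deg_θ[θ^k,j] for 0 ≤ j ≤ k−1. -/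
open Polynomial

/-- Let `n ≥ 2`, `A = F_q[θ]`, and let `φ` be the canonical
deformation of the Carlitz module over `A[t₁,…,t_n]`:
`φ_θ = (t₁−θ)⋯(t_n−θ)τ + θ`.  Writing `φ_{θ^k} = Σ_{j=0}^k [θ^k,j] τ^j` with
`[θ^k,j] ∈ A[t₁,…,t_n]` (the recursion being
`[θ^{k+1},j+1] = θ·[θ^k,j+1] + (t₁−θ)⋯(t_n−θ)·τ([θ^k,j])`, where `τ` acts on
`A[t₁,…,t_n]` by `θ ↦ θ^q`), one has
`deg_θ [θ^k,j] = q^j(k−j) + n(q^j−1)/(q−1)`, the leading coefficient of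
`[θ^k,j]` as a polynomial in `θ` lies in `F_q^×`, and in particular
`deg_θ [θ^k,k] > deg_θ [θ^k,j]` for `0 ≤ j ≤ k−1`. -/
theorem canonical_deformation_coeff_degrees
    (Fq : Type*) [Field Fq] [Fintype Fq]
    (q : ℕ) (hq : q = Fintype.card Fq)
    (n : ℕ) (hn : 2 ≤ n)
    (f : Polynomial (MvPolynomial (Fin n) Fq))
    (hf : f = ∏ i : Fin n, (Polynomial.C (MvPolynomial.X i) - Polynomial.X))
    (h : ℕ → ℕ → Polynomial (MvPolynomial (Fin n) Fq))
    (h00 : h 0 0 = 1)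
    (h0 : ∀ j : ℕ, h 0 (j + 1) = 0)
    (hrec0 : ∀ k : ℕ, h (k + 1) 0 = Polynomial.X * h k 0)
    (hrec : ∀ k j : ℕ, h (k + 1) (j + 1) =
      Polynomial.X * h k (j + 1) + f * ((h k j).comp (Polynomial.X ^ q))) :
    (∀ k j : ℕ, j ≤ k →
        (h k j).natDegree = q ^ j * (k - j) + n * ((q ^ j - 1) / (q - 1)) ∧
        ∃ c : Fq, c ≠ 0 ∧ (h k j).leadingCoeff = MvPolynomial.C c) ∧
      (∀ k j : ℕ, j < k → (h k j).natDegree < (h k k).natDegree) := by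
  have hq2 : 2 ≤ q := by rw [hq]; exact Fintype.one_lt_card
  -- the geometric sum
  set s : ℕ → ℕ := fun j => ∑ i ∈ Finset.range j, q ^ i with hs_def
  have hs_succ : ∀ j, s (j + 1) = 1 + q * s j := by
    intro j
    simp only [hs_def]
    rw [Finset.mul_sum, Finset.sum_range_succ']
    simp [pow_succ, mul_comm, add_comm]
  have hdiv : ∀ j : ℕ, (q ^ j - 1) / (q - 1) = s j := by
    intro j
    have h1 : 1 ≤ q ^ j := Nat.one_le_pow _ _ (by omega)
    have key : (q - 1) * s j = q ^ j - 1 := by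
      have hz : ((q : ℤ) - 1) * (∑ i ∈ Finset.range j, (q : ℤ) ^ i) = (q : ℤ) ^ j - 1 := by
        linarith [geom_sum_mul (q : ℤ) j]
      have hcast : (((q - 1) * s j : ℕ) : ℤ) = (((q ^ j - 1 : ℕ)) : ℤ) := by
        push_cast [hs_def, Nat.cast_sub (by omega : 1 ≤ q), Nat.cast_sub h1]
        linarith [hz]
      exact_mod_cast hcast
    rw [← key, Nat.mul_div_cancel_left _ (by omega : 0 < q - 1)]
  -- facts about `f`
  have hfac_deg : ∀ i : Fin n,
      (Polynomial.C (MvPolynomial.X i : MvPolynomial (Fin n) Fq) - Polynomial.X).natDegree = 1 := by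
    intro i
    have : (Polynomial.C (MvPolynomial.X i : MvPolynomial (Fin n) Fq) - Polynomial.X)
        = -(Polynomial.X - Polynomial.C (MvPolynomial.X i)) := by ring
    rw [this, natDegree_neg, natDegree_X_sub_C]
  have hfac_lc : ∀ i : Fin n,
      (Polynomial.C (MvPolynomial.X i : MvPolynomial (Fin n) Fq) - Polynomial.X).leadingCoeff
        = -1 := by
    intro i
    have : (Polynomial.C (MvPolynomial.X i : MvPolynomial (Fin n) Fq) - Polynomial.X)
        = -(Polynomial.X - Polynomial.C (MvPolynomial.X i)) := by ring
    rw [this, leadingCoeff_neg, (monic_X_sub_C _).leadingCoeff]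
  have hfac_ne : ∀ i : Fin n,
      (Polynomial.C (MvPolynomial.X i : MvPolynomial (Fin n) Fq) - Polynomial.X) ≠ 0 := by
    intro i hzero
    have := hfac_lc i
    rw [hzero, leadingCoeff_zero] at this
    exact one_ne_zero (neg_eq_zero.mp this.symm)
  have hf_deg : f.natDegree = n := by
    rw [hf, natDegree_prod _ _ (fun i _ => hfac_ne i)]
    simp [hfac_deg]
  have hf_lc : f.leadingCoeff = MvPolynomial.C ((-1 : Fq) ^ n) := by
    rw [hf, leadingCoeff_prod]
    simp [hfac_lc]
  have hf_lc_ne : f.leadingCoeff ≠ 0 := by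
    rw [hf_lc]
    simp [MvPolynomial.C_eq_zero]
  have hf_ne : f ≠ 0 := fun h0 => hf_lc_ne (by rw [h0, leadingCoeff_zero])
  -- nonzero from leading coefficient
  have lc_ne : ∀ (p : Polynomial (MvPolynomial (Fin n) Fq)) (c : Fq), c ≠ 0 →
      p.leadingCoeff = MvPolynomial.C c → p ≠ 0 := by
    intro p c hc hl hp
    rw [hp, leadingCoeff_zero] at hl
    exact hc (by simpa [MvPolynomial.C_eq_zero] using hl.symm)
  -- vanishing above the diagonal
  have hzero : ∀ k j : ℕ, k < j → h k j = 0 := by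
    intro k
    induction k with
    | zero =>
      intro j hj
      obtain ⟨j, rfl⟩ : ∃ j', j = j' + 1 := ⟨j - 1, by omega⟩
      exact h0 j
    | succ k ih =>
      intro j hj
      obtain ⟨j, rfl⟩ : ∃ j', j = j' + 1 := ⟨j - 1, by omega⟩
      rw [hrec, ih _ (by omega), ih _ (by omega)]
      simp
  -- the main induction
  have main : ∀ k j : ℕ, j ≤ k →
      (h k j).natDegree = q ^ j * (k - j) + n * s j ∧
      ∃ c : Fq, c ≠ 0 ∧ (h k j).leadingCoeff = MvPolynomial.C c := by
    intro k
    induction k with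
    | zero =>
      intro j hj
      interval_cases j
      refine ⟨by simp [h00, hs_def], 1, one_ne_zero, by simp [h00]⟩
    | succ k ih =>
      intro j hj
      cases j with
      | zero =>
        obtain ⟨hd, c, hc, hl⟩ := ih 0 (Nat.zero_le _)
        have hne : h k 0 ≠ 0 := lc_ne _ c hc hl
        constructor
        · rw [hrec0, natDegree_mul X_ne_zero hne, natDegree_X, hd]
          simp only [pow_zero, one_mul, Nat.sub_zero]
          omega
        · refine ⟨c, hc, ?_⟩
          rw [hrec0, leadingCoeff_mul, leadingCoeff_X, one_mul, hl]
      | succ j =>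
        -- properties of the second summand B := f * (h k j).comp (X ^ q)
        obtain ⟨hdB0, c, hc, hlB0⟩ := ih j (by omega)
        have hcomp_deg : ((h k j).comp (Polynomial.X ^ q)).natDegree
            = q * (h k j).natDegree := by
          rw [natDegree_comp, natDegree_pow, natDegree_X, mul_one, mul_comm]
        have hcomp_lc : ((h k j).comp (Polynomial.X ^ q)).leadingCoeff
            = MvPolynomial.C c := by
          rw [leadingCoeff_comp (by rw [natDegree_pow, natDegree_X, mul_one]; omega)]
          simp [hlB0, leadingCoeff_pow, leadingCoeff_X]
        have hcomp_ne : (h k j).comp (Polynomial.X ^ q) ≠ 0 :=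
          lc_ne _ c hc hcomp_lc
        have hBdeg : (f * (h k j).comp (Polynomial.X ^ q)).natDegree
            = q ^ (j + 1) * (k - j) + n * s (j + 1) := by
          rw [natDegree_mul hf_ne hcomp_ne, hcomp_deg, hf_deg, hdB0, hs_succ, pow_succ]
          have hkj : j ≤ k := by omega
          obtain ⟨m, rfl⟩ := Nat.exists_eq_add_of_le hkj
          simp only [Nat.add_sub_cancel_left]
          ring
        have hBlc : (f * (h k j).comp (Polynomial.X ^ q)).leadingCoeff
            = MvPolynomial.C ((-1 : Fq) ^ n * c) := by
          rw [leadingCoeff_mul, hf_lc, hcomp_lc, ← map_mul]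
        have hBne : f * (h k j).comp (Polynomial.X ^ q) ≠ 0 :=
          lc_ne _ _ (by simp [hc]) hBlc
        rcases eq_or_lt_of_le hj with heq | hlt
        · -- j + 1 = k + 1, i.e. j = k : the first summand vanishes
          have hjk : j = k := by omega
          subst hjk
          rw [hrec, hzero j (j + 1) (by omega), mul_zero, zero_add]
          refine ⟨?_, (-1 : Fq) ^ n * c, by simp [hc], hBlc⟩
          rw [hBdeg, Nat.sub_self]
          simp
        · -- j + 1 ≤ k : both summands present, second dominates
          have hjk : j + 1 ≤ k := by omega
          obtain ⟨hdA0, c', hc', hlA0⟩ := ih (j + 1) hjk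
          have hAne : h k (j + 1) ≠ 0 := lc_ne _ c' hc' hlA0
          have hAdeg : (Polynomial.X * h k (j + 1)).natDegree
              = 1 + (q ^ (j + 1) * (k - (j + 1)) + n * s (j + 1)) := by
            rw [natDegree_mul X_ne_zero hAne, natDegree_X, hdA0]
          have hltdeg : (Polynomial.X * h k (j + 1)).natDegree
              < (f * (h k j).comp (Polynomial.X ^ q)).natDegree := by
            rw [hAdeg, hBdeg]
            have hQ : 2 ≤ q ^ (j + 1) := by
              calc 2 = 2 ^ 1 := rfl
              _ ≤ q ^ (j + 1) := Nat.pow_le_pow_left (by omega) 1 |>.trans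
                (Nat.pow_le_pow_right (by omega) (by omega))
            have hm : k - j = (k - (j + 1)) + 1 := by omega
            rw [hm, Nat.mul_add, Nat.mul_one]
            omega
          constructor
          · rw [hrec, natDegree_add_eq_right_of_natDegree_lt hltdeg, hBdeg]
            have : k + 1 - (j + 1) = k - j := by omega
            rw [this]
          · refine ⟨(-1 : Fq) ^ n * c, by simp [hc], ?_⟩
            rw [hrec, leadingCoeff_add_of_degree_lt (degree_lt_degree hltdeg), hBlc]
  refine ⟨fun k j hjk => by rw [hdiv]; exact main k j hjk, ?_⟩
  -- second part : strict inequality of degrees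
  intro k j hjk
  obtain ⟨hdj, _⟩ := main k j (le_of_lt hjk)
  obtain ⟨hdk, _⟩ := main k k le_rfl
  rw [hdj, hdk, Nat.sub_self, Nat.mul_zero, Nat.zero_add]
  -- s k ≥ s j + (k - j) * q ^ j
  have hsk : s j + (k - j) * q ^ j ≤ s k := by
    have hsplit : s k = s j + ∑ i ∈ Finset.Ico j k, q ^ i := by
      simp only [hs_def, Finset.range_eq_Ico]
      rw [Finset.sum_Ico_consecutive _ (Nat.zero_le j) (le_of_lt hjk)]
    have hbound : (k - j) * q ^ j ≤ ∑ i ∈ Finset.Ico j k, q ^ i := by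
      calc (k - j) * q ^ j = ∑ _i ∈ Finset.Ico j k, q ^ j := by
            rw [Finset.sum_const, Nat.card_Ico, smul_eq_mul]
      _ ≤ ∑ i ∈ Finset.Ico j k, q ^ i :=
            Finset.sum_le_sum fun i hi => Nat.pow_le_pow_right (by omega)
              (Finset.mem_Ico.mp hi).1
    omega
  have hq1 : 1 ≤ q ^ j := Nat.one_le_pow _ _ (by omega)
  have hkj1 : 1 ≤ k - j := by omega
  -- q^j * (k-j) + n * s j < n * s k
  have h1 : 1 ≤ (k - j) * q ^ j := Nat.one_le_iff_ne_zero.mpr (by positivity)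
  calc q ^ j * (k - j) + n * s j
      < 2 * ((k - j) * q ^ j) + n * s j := by
        rw [mul_comm (q ^ j)]
        omega
    _ ≤ n * ((k - j) * q ^ j) + n * s j := by
        exact Nat.add_le_add_right (Nat.mul_le_mul_right _ hn) _
    _ = n * (s j + (k - j) * q ^ j) := by ring
    _ ≤ n * s k := Nat.mul_le_mul_left _ hsk
end

section
/- Let q ≥ 2, n ≥ 2, and let φ be the canonical Carlitz deformation φ_θ = (t₁−θ)⋯(t_n−θ)τ + θ over A[t₁,…,t_n]. Let u ∈ A[t₁,…,t_n]∖{0} have leading coefficient (in θ) in F_q^×. If c ∈ F_q(t₁,…,t_n)[θ] satisfies φ_c(u) ∈ A[t₁,…,t_n], then c ∈ A[t₁,…,t_n]. -/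
open Polynomial

/-- The Frobenius twist `τ` on `k(t₁,…,t_n)[θ]`: it fixes the coefficient
field (which is generated by the `t_i` over `F_q`) and sends `θ ↦ θ^q`. -/
noncomputable def frobTwist (R : Type*) [CommSemiring R] (q : ℕ) :
    Polynomial R →ₗ[R] Polynomial R where
  toFun p := p.comp (Polynomial.X ^ q)
  map_add' a b := by simp [Polynomial.add_comp]
  map_smul' c p := by simp [Polynomial.smul_comp]

/-- The canonical Carlitz deformation `φ_θ = (t₁−θ)⋯(t_n−θ)τ + θ`, as a
`k(t₁,…,t_n)`-linear endomorphism of `k(t₁,…,t_n)[θ]`. -/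
noncomputable def carlitzDefTheta (KK : Type*) [CommRing KK] (q : ℕ)
    (f : Polynomial KK) : Module.End KK (Polynomial KK) :=
  (LinearMap.mulLeft KK f).comp (frobTwist KK q) + LinearMap.mulLeft KK Polynomial.X

lemma carlitzDefTheta_apply' (K : Type*) [CommRing K] (q : ℕ) (f p : Polynomial K) :
    carlitzDefTheta K q f p = f * p.comp (X ^ q) + X * p := rfl

lemma carlitz_step {K : Type*} [Field K] {q n : ℕ} (hq2 : 2 ≤ q) (hn : 2 ≤ n)
    {f : Polynomial K} (hfd : f.natDegree = n) (hf0 : f ≠ 0)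
    {p : Polynomial K} (hp : p ≠ 0) :
    (carlitzDefTheta K q f p).natDegree = q * p.natDegree + n ∧
      (carlitzDefTheta K q f p).leadingCoeff = f.leadingCoeff * p.leadingCoeff := by
  have hXq : (X ^ q : Polynomial K).natDegree = q := natDegree_X_pow q
  have hq0 : (X ^ q : Polynomial K).natDegree ≠ 0 := by omega
  have hlcc : (p.comp (X ^ q)).leadingCoeff = p.leadingCoeff := by
    rw [leadingCoeff_comp hq0, leadingCoeff_X_pow, one_pow, mul_one]
  have hc0 : p.comp (X ^ q) ≠ 0 := by
    rw [← leadingCoeff_ne_zero, hlcc, leadingCoeff_ne_zero]; exact hp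
  have hcd : (p.comp (X ^ q)).natDegree = p.natDegree * q := by
    rw [natDegree_comp, hXq]
  have hM : (f * p.comp (X ^ q)).natDegree = q * p.natDegree + n := by
    rw [natDegree_mul hf0 hc0, hcd, hfd]; ring
  have hMlc : (f * p.comp (X ^ q)).leadingCoeff = f.leadingCoeff * p.leadingCoeff := by
    rw [leadingCoeff_mul, hlcc]
  have hm : (X * p).natDegree < (f * p.comp (X ^ q)).natDegree := by
    rw [natDegree_mul X_ne_zero hp, natDegree_X, hM]
    have : p.natDegree ≤ q * p.natDegree := Nat.le_mul_of_pos_left _ (by omega)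
    omega
  have hdeg : (X * p).degree < (f * p.comp (X ^ q)).degree := degree_lt_degree hm
  constructor
  · rw [carlitzDefTheta_apply', natDegree_add_eq_left_of_natDegree_lt hm, hM]
  · rw [carlitzDefTheta_apply', leadingCoeff_add_of_degree_lt' hdeg, hMlc]

lemma carlitz_division_aux {R K : Type*} [CommRing R] [Field K] (φ : R →+* K)
    {q n : ℕ} (hq2 : 2 ≤ q) (hn : 2 ≤ n)
    {f : Polynomial K} (hfd : f.natDegree = n) (hf0 : f ≠ 0)
    (hfint : ∃ f₀ : Polynomial R, f₀.map φ = f)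
    (hflead : ∃ a b : R, φ a = f.leadingCoeff ∧ φ a * φ b = 1)
    {u : Polynomial K} (hu0 : u ≠ 0)
    (huint : ∃ u₀ : Polynomial R, u₀.map φ = u)
    (hulead : ∃ a b : R, φ a = u.leadingCoeff ∧ φ a * φ b = 1)
    (c : Polynomial K)
    (hc : ∀ m : ℕ, ((Polynomial.aeval (carlitzDefTheta K q f) c) u).coeff m ∈ φ.range) :
    ∀ m : ℕ, c.coeff m ∈ φ.range := by
  set T := carlitzDefTheta K q f with hT
  set E : ℕ → Polynomial K := fun i => (T ^ i) u with hE
  have hE0 : E 0 = u := by simp [hE]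
  have hEs : ∀ i, E (i + 1) = T (E i) := by
    intro i
    simp only [hE, pow_succ' T i, Module.End.mul_apply]
  have hlcE : ∀ i, E i ≠ 0 ∧ (E i).leadingCoeff = f.leadingCoeff ^ i * u.leadingCoeff := by
    intro i
    induction i with
    | zero => exact ⟨by rw [hE0]; exact hu0, by rw [hE0, pow_zero, one_mul]⟩
    | succ i ih =>
      obtain ⟨h0, hlc⟩ := ih
      have step := carlitz_step hq2 hn hfd hf0 h0
      constructor
      · rw [← leadingCoeff_ne_zero, hEs i, step.2, hlc]
        exact mul_ne_zero (leadingCoeff_ne_zero.mpr hf0)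
          (mul_ne_zero (pow_ne_zero _ (leadingCoeff_ne_zero.mpr hf0))
            (leadingCoeff_ne_zero.mpr hu0))
      · rw [hEs i, step.2, hlc, pow_succ]; ring
  set D : ℕ → ℕ := fun i => (E i).natDegree with hD
  have hDmono : StrictMono D := by
    apply strictMono_nat_of_lt_succ
    intro i
    have step := (carlitz_step hq2 hn hfd hf0 (hlcE i).1).1
    have heq : D (i + 1) = q * D i + n := by rw [hD]; simp only [hEs i]; exact step
    have h2 : D i ≤ q * D i := Nat.le_mul_of_pos_left _ (by omega)
    omega
  obtain ⟨f₀, hf₀⟩ := hfint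
  have hEint : ∀ i, ∃ w : Polynomial R, w.map φ = E i := by
    intro i
    induction i with
    | zero => rw [hE0]; exact huint
    | succ i ih =>
      obtain ⟨w, hw⟩ := ih
      refine ⟨f₀ * w.comp (X ^ q) + X * w, ?_⟩
      rw [hEs i, carlitzDefTheta_apply', ← hw, ← hf₀]
      simp [Polynomial.map_add, Polynomial.map_mul, Polynomial.map_comp, Polynomial.map_pow]
  have key : ∀ cc : Polynomial K, (Polynomial.aeval T cc) u =
      ∑ i ∈ Finset.range (cc.natDegree + 1), cc.coeff i • E i := by
    intro cc
    rw [Polynomial.aeval_eq_sum_range]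
    simp [hE, LinearMap.sum_apply, LinearMap.smul_apply]
  have main : ∀ k, ∀ cc : Polynomial K, cc.support.card ≤ k →
      (∀ m, ((Polynomial.aeval T cc) u).coeff m ∈ φ.range) →
      ∀ m, cc.coeff m ∈ φ.range := by
    intro k
    induction k with
    | zero =>
      intro cc hcard _ m
      have : cc = 0 := Polynomial.support_eq_empty.mp (Finset.card_eq_zero.mp (Nat.le_zero.mp hcard))
      rw [this, Polynomial.coeff_zero]
      exact ⟨0, map_zero φ⟩
    | succ k IH =>
      intro cc hcard hcc
      by_cases h0 : cc = 0
      · intro m; rw [h0, Polynomial.coeff_zero]; exact ⟨0, map_zero φ⟩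
      set N := cc.natDegree with hN
      have htop : ((Polynomial.aeval T cc) u).coeff (D N) = cc.coeff N * (E N).leadingCoeff := by
        rw [key, Polynomial.finset_sum_coeff, Finset.sum_eq_single N]
        · simp only [Polynomial.coeff_smul, smul_eq_mul, hD, Polynomial.coeff_natDegree]
        · intro i hi hiN
          have hlt : D i < D N :=
            hDmono (lt_of_le_of_ne (Nat.lt_succ_iff.mp (Finset.mem_range.mp hi)) hiN)
          rw [Polynomial.coeff_smul, Polynomial.coeff_eq_zero_of_natDegree_lt hlt, smul_zero]
        · intro hNn; exact absurd (Finset.self_mem_range_succ N) hNn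
      obtain ⟨af, bf, haf, habf⟩ := hflead
      obtain ⟨au, bu, hau, habu⟩ := hulead
      have hNmem : cc.coeff N ∈ φ.range := by
        have h1 := hcc (D N)
        rw [htop] at h1
        have hone : (f.leadingCoeff ^ N * u.leadingCoeff) * (φ bf ^ N * φ bu) = 1 := by
          rw [← haf, ← hau]
          calc (φ af ^ N * φ au) * (φ bf ^ N * φ bu)
              = (φ af * φ bf) ^ N * (φ au * φ bu) := by ring
            _ = 1 := by rw [habf, habu, one_pow, one_mul]
        have heq : cc.coeff N =
            (cc.coeff N * (E N).leadingCoeff) * (φ bf ^ N * φ bu) := by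
          rw [(hlcE N).2]
          calc cc.coeff N = cc.coeff N * 1 := (mul_one _).symm
            _ = _ := by rw [← hone]; ring
        rw [heq]
        exact mul_mem h1 ⟨bf ^ N * bu, by rw [map_mul, map_pow]⟩
      have hdecomp : cc.eraseLead = cc - Polynomial.C (cc.coeff N) * X ^ N := by
        have h := Polynomial.eraseLead_add_C_mul_X_pow cc
        rw [← Polynomial.coeff_natDegree, ← hN] at h
        rw [eq_sub_iff_add_eq]
        exact h
      have hErase : ∀ m, ((Polynomial.aeval T cc.eraseLead) u).coeff m ∈ φ.range := by
        intro m
        have hv : (Polynomial.aeval T cc.eraseLead) u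
            = (Polynomial.aeval T cc) u - cc.coeff N • E N := by
          rw [hdecomp, map_sub, map_mul, Polynomial.aeval_C, map_pow, Polynomial.aeval_X]
          simp [hE, LinearMap.sub_apply, Module.algebraMap_end_apply, Module.End.mul_apply]
        rw [hv, Polynomial.coeff_sub, Polynomial.coeff_smul, smul_eq_mul]
        obtain ⟨w, hw⟩ := hEint N
        have hwm : (E N).coeff m ∈ φ.range := ⟨w.coeff m, by rw [← hw, Polynomial.coeff_map]⟩
        exact sub_mem (hcc m) (mul_mem hNmem hwm)
      have hcard' : cc.eraseLead.support.card ≤ k := by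
        have := Polynomial.card_support_eraseLead_add_one h0
        omega
      have hc' := IH cc.eraseLead hcard' hErase
      intro m
      by_cases hm : m = N
      · rw [hm]; exact hNmem
      · rw [← Polynomial.eraseLead_coeff_of_ne m hm]; exact hc' m
  exact main c.support.card c le_rfl hc

/-- Let `q ≥ 2`, `n ≥ 2`, and let `φ` be the canonical
Carlitz deformation `φ_θ = (t₁−θ)⋯(t_n−θ)τ + θ` over `A[t₁,…,t_n]`,
extended `F_q(t₁,…,t_n)`-linearly to `𝔸 = F_q(t₁,…,t_n)[θ]`
(via `c ↦ φ_c = c(φ_θ)`).  Let `u ∈ A[t₁,…,t_n] ∖ {0}` have leading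
coefficient (in `θ`) in `F_q^×`.  If `c ∈ F_q(t₁,…,t_n)[θ]` satisfies
`φ_c(u) ∈ A[t₁,…,t_n]`, then `c ∈ A[t₁,…,t_n]`. -/
theorem division_lemma_carlitz_deformation
    (Fq : Type*) [Field Fq] [Fintype Fq]
    (q : ℕ) (hq : q = Fintype.card Fq) (hq2 : 2 ≤ q)
    (n : ℕ) (hn : 2 ≤ n)
    (f : Polynomial (FractionRing (MvPolynomial (Fin n) Fq)))
    (hf : f = ∏ i : Fin n,
      (Polynomial.C (algebraMap (MvPolynomial (Fin n) Fq) _ (MvPolynomial.X i))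
        - Polynomial.X))
    (u : Polynomial (FractionRing (MvPolynomial (Fin n) Fq)))
    (hu0 : u ≠ 0)
    (huInt : ∀ m : ℕ, u.coeff m ∈
      (algebraMap (MvPolynomial (Fin n) Fq)
        (FractionRing (MvPolynomial (Fin n) Fq))).range)
    (hulead : ∃ c₀ : Fq, c₀ ≠ 0 ∧ u.leadingCoeff =
      algebraMap (MvPolynomial (Fin n) Fq) _ (MvPolynomial.C c₀))
    (c : Polynomial (FractionRing (MvPolynomial (Fin n) Fq)))
    (hc : ∀ m : ℕ,
      ((Polynomial.aeval
          (carlitzDefTheta (FractionRing (MvPolynomial (Fin n) Fq)) q f) c) u).coeff m ∈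
        (algebraMap (MvPolynomial (Fin n) Fq)
          (FractionRing (MvPolynomial (Fin n) Fq))).range) :
    ∀ m : ℕ, c.coeff m ∈
      (algebraMap (MvPolynomial (Fin n) Fq)
        (FractionRing (MvPolynomial (Fin n) Fq))).range := by
  let φ := algebraMap (MvPolynomial (Fin n) Fq) (FractionRing (MvPolynomial (Fin n) Fq))
  have hfactor : ∀ a : MvPolynomial (Fin n) Fq,
      (Polynomial.C (φ a) - X : Polynomial (FractionRing (MvPolynomial (Fin n) Fq))).natDegree = 1 ∧
      (Polynomial.C (φ a) - X : Polynomial (FractionRing (MvPolynomial (Fin n) Fq))).leadingCoeff = -1 := by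
    intro a
    have h : (Polynomial.C (φ a) - X : Polynomial (FractionRing (MvPolynomial (Fin n) Fq)))
        = -(X - Polynomial.C (φ a)) := by ring
    rw [h, natDegree_neg, natDegree_X_sub_C, leadingCoeff_neg, (monic_X_sub_C (φ a)).leadingCoeff]
    exact ⟨rfl, rfl⟩
  have hfactor0 : ∀ a : MvPolynomial (Fin n) Fq,
      (Polynomial.C (φ a) - X : Polynomial (FractionRing (MvPolynomial (Fin n) Fq))) ≠ 0 := by
    intro a h
    have h1 := (hfactor a).1
    rw [h, natDegree_zero] at h1
    exact absurd h1 (by omega)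
  have hfd : f.natDegree = n := by
    rw [hf, natDegree_prod _ _ fun i _ => hfactor0 (MvPolynomial.X i)]
    simp [(hfactor _).1]
  have hflc : f.leadingCoeff = (-1 : FractionRing (MvPolynomial (Fin n) Fq)) ^ n := by
    rw [hf, leadingCoeff_prod]
    exact (Finset.prod_congr rfl fun i _ => (hfactor (MvPolynomial.X i)).2).trans (by simp)
  have hf0 : f ≠ 0 := by
    rw [← leadingCoeff_ne_zero, hflc]
    exact pow_ne_zero _ (neg_ne_zero.mpr one_ne_zero)
  have hfint : ∃ f₀ : Polynomial (MvPolynomial (Fin n) Fq), f₀.map φ = f := by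
    refine ⟨∏ i : Fin n, (Polynomial.C (MvPolynomial.X i) - X), ?_⟩
    rw [hf, Polynomial.map_prod]
    simp [Polynomial.map_sub]; rfl
  have hflead : ∃ a b : MvPolynomial (Fin n) Fq,
      φ a = f.leadingCoeff ∧ φ a * φ b = 1 := by
    refine ⟨(-1) ^ n, (-1) ^ n, ?_, ?_⟩
    · rw [hflc]; simp
    · rw [← map_mul, ← pow_add, Even.neg_one_pow ⟨n, rfl⟩, map_one]
  have huint : ∃ u₀ : Polynomial (MvPolynomial (Fin n) Fq), u₀.map φ = u := by
    have : u ∈ lifts φ := (lifts_iff_coeff_lifts u).2 fun m => by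
      rcases huInt m with ⟨a, ha⟩; exact ⟨a, ha⟩
    exact (mem_lifts u).1 this
  have hulead' : ∃ a b : MvPolynomial (Fin n) Fq,
      φ a = u.leadingCoeff ∧ φ a * φ b = 1 := by
    obtain ⟨c₀, hc₀, hlu⟩ := hulead
    refine ⟨MvPolynomial.C c₀, MvPolynomial.C c₀⁻¹, hlu.symm, ?_⟩
    rw [← map_mul, ← MvPolynomial.C_mul, mul_inv_cancel₀ hc₀, MvPolynomial.C_1, map_one]
  exact carlitz_division_aux φ hq2 hn hfd hf0 hfint hflead hu0 huint hulead' c hc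
end

section
/- Let φ be a Drinfeld A-module over O_L (the integral closure of A = F_q[θ] in a finite extension L/K), with z-deformation φ̃_θ = Σ_j z^j α_j τ^j where φ_θ = Σ_j α_j τ^j. Then the Taelman-type class module H(φ̃/O_L[z]) = T_z(L_∞)/(O_L[z] + exp_{φ̃}(T_z(L_∞))) is a finitely generated torsion F_q[z]-module; in particular the multiplication-by-z map on H(φ̃/O_L[z]) is injective. -/
/-- Let `φ` be a Drinfeld `A`-module over `O_L` with
`z`-deformation `φ̃` (`φ̃_θ = Σ_j z^j α_j τ^j`).  Then the Taelman-type class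
module `H(φ̃/O_L[z]) = T_z(L_∞)/(O_L[z] + exp_{φ̃}(T_z(L_∞)))` is a finitely
generated torsion `F_q[z]`-module; in particular multiplication by `z` is
injective on `H(φ̃/O_L[z])`.

We axiomatize the analytic setting: `T` stands for the Tate algebra
`T_z(L_∞)`, an algebra over `F_q[z] = Polynomial Fq` (the variable `z` acting
through `algebraMap`), `OLz` for the `F_q[z]`-submodule `O_L[z]` of `T`, and
`E` for `exp_{φ̃}`, an `F_q[z]`-linear endomorphism of `T`.  The key facts,
which may be assumed (cf. the context), are the congruence
`exp_{φ̃}(x) ≡ x (mod z)` and the finite generation of the quotient over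
`F_q[z]`. -/
theorem class_module_of_z_deformation_is_torsion
    (Fq : Type*) [Field Fq] [Fintype Fq]
    (T : Type*) [CommRing T] [Algebra (Polynomial Fq) T]
    (OLz : Submodule (Polynomial Fq) T)
    (E : T →ₗ[Polynomial Fq] T)
    (hmodz : ∀ t : T, ∃ t' : T,
      E t - t = algebraMap (Polynomial Fq) T Polynomial.X * t')
    (hfg : Module.Finite (Polynomial Fq) (T ⧸ (OLz ⊔ LinearMap.range E))) :
    Module.Finite (Polynomial Fq) (T ⧸ (OLz ⊔ LinearMap.range E)) ∧
    Module.IsTorsion (Polynomial Fq) (T ⧸ (OLz ⊔ LinearMap.range E)) ∧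
    Function.Injective (fun h : T ⧸ (OLz ⊔ LinearMap.range E) =>
      (Polynomial.X : Polynomial Fq) • h) := by
  classical
  set N := OLz ⊔ LinearMap.range E with hN
  set H := T ⧸ N
  -- every element of H is X • something
  have hsurj : ∀ h : H, ∃ h' : H, (Polynomial.X : Polynomial Fq) • h' = h := by
    intro h
    obtain ⟨t, rfl⟩ := Submodule.Quotient.mk_surjective N h
    obtain ⟨t', ht'⟩ := hmodz t
    refine ⟨Submodule.Quotient.mk (-t'), ?_⟩
    have hEt : (Submodule.Quotient.mk (E t) : H) = 0 := by
      rw [Submodule.Quotient.mk_eq_zero]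
      exact Submodule.mem_sup_right ⟨t, rfl⟩
    have : (Polynomial.X : Polynomial Fq) • (-t' : T) = t - E t := by
      have : (Polynomial.X : Polynomial Fq) • (t' : T)
          = algebraMap (Polynomial Fq) T Polynomial.X * t' := by
        rw [Algebra.smul_def]
      rw [smul_neg, this, ← ht']; ring
    calc (Polynomial.X : Polynomial Fq) • (Submodule.Quotient.mk (-t') : H)
        = Submodule.Quotient.mk ((Polynomial.X : Polynomial Fq) • (-t' : T)) := rfl
      _ = Submodule.Quotient.mk (t - E t) := by rw [this]
      _ = Submodule.Quotient.mk t - Submodule.Quotient.mk (E t) := by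
            rw [Submodule.Quotient.mk_sub]
      _ = Submodule.Quotient.mk t := by rw [hEt, sub_zero]
  -- Nakayama
  have hle : (⊤ : Submodule (Polynomial Fq) H)
      ≤ (Ideal.span {(Polynomial.X : Polynomial Fq)}) • ⊤ := by
    intro h _
    obtain ⟨h', rfl⟩ := hsurj h
    exact Submodule.smul_mem_smul (Ideal.mem_span_singleton_self _) trivial
  obtain ⟨r, hr1, hr0⟩ :=
    Submodule.exists_sub_one_mem_and_smul_eq_zero_of_fg_of_le_smul
      (Ideal.span {(Polynomial.X : Polynomial Fq)}) ⊤
      (Module.Finite.fg_top (R := Polynomial Fq) (M := H)) hle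
  have hrne : r ≠ 0 := by
    intro h0
    rw [h0, zero_sub, Ideal.mem_span_singleton] at hr1
    exact Polynomial.not_isUnit_X (isUnit_of_dvd_unit hr1 isUnit_one.neg)
  obtain ⟨c, hc⟩ : (Polynomial.X : Polynomial Fq) ∣ r - 1 :=
    Ideal.mem_span_singleton.mp hr1
  refine ⟨hfg, ?_, ?_⟩
  · intro h
    exact ⟨⟨r, mem_nonZeroDivisors_of_ne_zero hrne⟩, hr0 h trivial⟩
  · intro a b hab
    simp only at hab
    have key : ∀ h : H, (Polynomial.X : Polynomial Fq) • h = 0 → h = 0 := by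
      intro h hX
      have : r • h = 0 := hr0 h trivial
      have hr' : r • h = h + c • ((Polynomial.X : Polynomial Fq) • h) := by
        have : r = 1 + Polynomial.X * c := by rw [← hc]; ring
        rw [this, add_smul, one_smul, mul_smul]
        rw [smul_comm]
      rw [hr', hX, smul_zero, add_zero] at this
      exact this
    have := key (a - b) (by rw [smul_sub, hab, sub_self])
    exact sub_eq_zero.mp this
end
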